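/- Let f : ℤ_p → ℤ_p be a measure-preserving 1-Lipschitz function with van der Put coefficients B_m = p^{n−1}(b_{m0} + b_{m1}p + ⋯) for p^{n−1} ≤ m ≤ p^n − 1, n ≥ 2. Then Σ_{m=p^{n−1}}^{p^n−1} B_m ≡ (1/2)(p−1)p^{2n−1} + T_n p^n (mod p^{n+1}), where T_n = Σ_{m=p^{n−1}}^{p^n−1} b_{m1}. -/

import Mathlib

open MeasureTheory Finset

namespace VDP

noncomputable instance (p : ℕ) [Fact p.Prime] : MeasurableSpace ℤ_[p] := borel _
instance (p : ℕ) [Fact p.Prime] : BorelSpace ℤ_[p] := ⟨rfl⟩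

/-- The Haar probability measure on `ℤ_[p]`. -/
noncomputable def haarZp (p : ℕ) [Fact p.Prime] : Measure ℤ_[p] :=
  Measure.addHaarMeasure ⊤

/-- `f` is 1-Lipschitz. -/
def IsLip (p : ℕ) [Fact p.Prime] (f : ℤ_[p] → ℤ_[p]) : Prop :=
  ∀ x y : ℤ_[p], ‖f x - f y‖ ≤ ‖x - y‖

/-- The van der Put basis function `χ(m, x)` on `ℤ_[p]` (with `⌊log_p 0⌋ = 0`). -/
noncomputable def chi (p : ℕ) [Fact p.Prime] (m : ℕ) (x : ℤ_[p]) : ℤ_[p] :=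
  if ‖x - (m : ℤ_[p])‖ ≤ ((p : ℝ) ^ (Nat.log p m + 1))⁻¹ then 1 else 0

/-- `q(m) = m_s p^s`, the leading term of the `p`-adic expansion of `m`. -/
def q (p m : ℕ) : ℕ := m / p ^ Nat.log p m * p ^ Nat.log p m

/-- `f` has van der Put expansion with coefficients `B`. -/
def vdpExpansion (p : ℕ) [Fact p.Prime] (f : ℤ_[p] → ℤ_[p]) (B : ℕ → ℤ_[p]) : Prop :=
  ∀ x, f x = ∑' m, B m * chi p m x

/-- `f` is bijective modulo `p^n`. -/
def BijModPow (p : ℕ) [Fact p.Prime] (f : ℤ_[p] → ℤ_[p]) (n : ℕ) : Prop :=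
  Function.Bijective fun a : ZMod (p ^ n) => PadicInt.toZModPow n (f ((a.val : ℕ) : ℤ_[p]))

/-- `f` is transitive modulo `p^n`. -/
def TransModPow (p : ℕ) [Fact p.Prime] (f : ℤ_[p] → ℤ_[p]) (n : ℕ) : Prop :=
  ∀ x : ℤ_[p], ∀ a : ZMod (p ^ n), ∃ k : ℕ, PadicInt.toZModPow n (f^[k] x) = a

/-- The `i`-th digit of the canonical `p`-adic expansion of `x`. -/
noncomputable def digit (p : ℕ) [Fact p.Prime] (x : ℤ_[p]) (i : ℕ) : ℕ :=
  x.appr (i + 1) / p ^ i % p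

end VDP

open VDP MeasureTheory Finset

variable {p : ℕ} [Fact p.Prime]

lemma tz_eq_iff (n : ℕ) (x y : ℤ_[p]) :
    PadicInt.toZModPow n x = PadicInt.toZModPow n y ↔ (p : ℤ_[p]) ^ n ∣ x - y := by
  rw [← sub_eq_zero, ← map_sub, ← RingHom.mem_ker, PadicInt.ker_toZModPow,
    Ideal.mem_span_singleton]

lemma tz_eq_iff_norm (n : ℕ) (x y : ℤ_[p]) :
    PadicInt.toZModPow n x = PadicInt.toZModPow n y ↔ ‖x - y‖ ≤ (p : ℝ) ^ (-n : ℤ) := by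
  rw [tz_eq_iff, PadicInt.norm_le_pow_iff_mem_span_pow, Ideal.mem_span_singleton]

lemma tz_natCast (n : ℕ) (a : ZMod (p ^ n)) :
    PadicInt.toZModPow n ((a.val : ℕ) : ℤ_[p]) = a := by
  rw [map_natCast, ZMod.natCast_val, ZMod.cast_id]

instance : (haarZp p).IsAddLeftInvariant := by unfold haarZp; infer_instance
instance : (haarZp p).IsOpenPosMeasure := by unfold haarZp; infer_instance

lemma fiber_eq_ball (n : ℕ) (a : ZMod (p ^ n)) :
    {x : ℤ_[p] | PadicInt.toZModPow n x = a}
      = Metric.ball ((a.val : ℕ) : ℤ_[p]) ((p : ℝ) ^ ((-n : ℤ) + 1)) := by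
  ext x
  have hp1 : (1 : ℝ) < p := by exact_mod_cast (Fact.out : p.Prime).one_lt
  simp only [Set.mem_setOf_eq, Metric.mem_ball, dist_eq_norm]
  have h := tz_eq_iff_norm n x ((a.val : ℕ) : ℤ_[p])
  rw [tz_natCast] at h
  rw [h, PadicInt.norm_le_pow_iff_norm_lt_pow_add_one]

lemma measurable_fiber (n : ℕ) (a : ZMod (p ^ n)) :
    MeasurableSet {x : ℤ_[p] | PadicInt.toZModPow n x = a} := by
  rw [fiber_eq_ball]; exact measurableSet_ball

lemma fiber_measure (n : ℕ) (a : ZMod (p ^ n)) :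
    haarZp p {x : ℤ_[p] | PadicInt.toZModPow n x = a}
      = haarZp p {x : ℤ_[p] | PadicInt.toZModPow n x = 0} := by
  have : (fun x : ℤ_[p] => ((a.val : ℕ) : ℤ_[p]) + x) ⁻¹'
      {x : ℤ_[p] | PadicInt.toZModPow n x = a} = {x : ℤ_[p] | PadicInt.toZModPow n x = 0} := by
    ext x
    simp only [Set.mem_preimage, Set.mem_setOf_eq, map_add, tz_natCast]
    constructor
    · intro h; have := add_left_cancel (a := a) (b := PadicInt.toZModPow n x) (c := 0)
      apply this; simpa using h
    · intro h; simp [h]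
  rw [← this, measure_preimage_add]

lemma fiber_pos (n : ℕ) (a : ZMod (p ^ n)) :
    0 < haarZp p {x : ℤ_[p] | PadicInt.toZModPow n x = a} := by
  rw [fiber_eq_ball]
  have hp1 : (1 : ℝ) < p := by exact_mod_cast (Fact.out : p.Prime).one_lt
  refine Measure.measure_pos_of_nonempty_interior _ ?_
  rw [Metric.isOpen_ball.interior_eq]
  exact ⟨_, Metric.mem_ball_self (by positivity)⟩

lemma fiber_ne_top (n : ℕ) (a : ZMod (p ^ n)) :
    haarZp p {x : ℤ_[p] | PadicInt.toZModPow n x = a} ≠ ⊤ := by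
  refine ne_top_of_le_ne_top ?_ (measure_mono (Set.subset_univ _))
  have : haarZp p (Set.univ : Set ℤ_[p]) = 1 := by
    simpa [haarZp] using Measure.addHaarMeasure_self (K₀ := (⊤ : TopologicalSpace.PositiveCompacts ℤ_[p]))
  simp [this]

lemma F_inj (f : ℤ_[p] → ℤ_[p]) (hf : IsLip p f)
    (hmp : MeasurePreserving f (haarZp p) (haarZp p)) (n : ℕ) :
    Function.Injective fun a : ZMod (p ^ n) => PadicInt.toZModPow n (f ((a.val : ℕ) : ℤ_[p])) := by
  intro b₁ b₂ hEq
  by_contra hne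
  simp only at hEq
  set a := PadicInt.toZModPow n (f ((b₁.val : ℕ) : ℤ_[p])) with ha
  -- each fiber S bᵢ maps into f ⁻¹' (S a)
  have key : ∀ b : ZMod (p ^ n), PadicInt.toZModPow n (f ((b.val : ℕ) : ℤ_[p])) = a →
      {x : ℤ_[p] | PadicInt.toZModPow n x = b} ⊆
        f ⁻¹' {x : ℤ_[p] | PadicInt.toZModPow n x = a} := by
    intro b hb x hx
    simp only [Set.mem_setOf_eq] at hx
    have h1 : PadicInt.toZModPow n x = PadicInt.toZModPow n ((b.val : ℕ) : ℤ_[p]) := by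
      rw [hx, tz_natCast]
    rw [tz_eq_iff_norm] at h1
    have h2 : ‖f x - f ((b.val : ℕ) : ℤ_[p])‖ ≤ (p : ℝ) ^ (-n : ℤ) := le_trans (hf _ _) h1
    rw [← tz_eq_iff_norm] at h2
    simp only [Set.mem_preimage, Set.mem_setOf_eq]
    rw [h2, hb]
  have hsub : {x : ℤ_[p] | PadicInt.toZModPow n x = b₁} ∪
      {x : ℤ_[p] | PadicInt.toZModPow n x = b₂} ⊆
        f ⁻¹' {x : ℤ_[p] | PadicInt.toZModPow n x = a} :=
    Set.union_subset (key b₁ rfl) (key b₂ hEq.symm)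
  have hdisj : Disjoint {x : ℤ_[p] | PadicInt.toZModPow n x = b₁}
      {x : ℤ_[p] | PadicInt.toZModPow n x = b₂} := by
    rw [Set.disjoint_left]
    intro x h1 h2
    exact hne (h1.symm.trans h2)
  have hμ : haarZp p (f ⁻¹' {x : ℤ_[p] | PadicInt.toZModPow n x = a})
      = haarZp p {x : ℤ_[p] | PadicInt.toZModPow n x = a} :=
    hmp.measure_preimage (measurable_fiber n a).nullMeasurableSet
  have hun : haarZp p ({x : ℤ_[p] | PadicInt.toZModPow n x = b₁} ∪
      {x : ℤ_[p] | PadicInt.toZModPow n x = b₂})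
      = haarZp p {x : ℤ_[p] | PadicInt.toZModPow n x = b₁}
        + haarZp p {x : ℤ_[p] | PadicInt.toZModPow n x = b₂} :=
    measure_union hdisj (measurable_fiber n b₂)
  have hle := measure_mono (μ := haarZp p) hsub
  rw [hun, hμ, fiber_measure n a, fiber_measure n b₁, fiber_measure n b₂] at hle
  set v := haarZp p {x : ℤ_[p] | PadicInt.toZModPow n x = (0 : ZMod (p ^ n))}
  have hv0 : 0 < v := fiber_pos n 0
  have hvt : v ≠ ⊤ := fiber_ne_top n 0
  have : v + v ≤ v + 0 := by simpa using hle
  have := (ENNReal.add_le_add_iff_left hvt).mp this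
  exact absurd this (by simpa using hv0.ne')

lemma chi_nat (k m : ℕ) :
    chi p k (m : ℤ_[p])
      = if (p : ℤ) ^ (Nat.log p k + 1) ∣ (m : ℤ) - (k : ℤ) then 1 else 0 := by
  unfold chi
  refine if_congr ?_ rfl rfl
  have h1 : (m : ℤ_[p]) - (k : ℤ_[p]) = (((m : ℤ) - (k : ℤ) : ℤ) : ℤ_[p]) := by push_cast; ring
  have h2 : ((p : ℝ) ^ (Nat.log p k + 1))⁻¹ = (p : ℝ) ^ (-(Nat.log p k + 1) : ℤ) := by
    rw [← zpow_natCast, ← zpow_neg]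
    norm_num
  rw [h1, h2]
  exact_mod_cast PadicInt.norm_int_le_pow_iff_dvd (k := (m : ℤ) - k) (n := Nat.log p k + 1)

lemma not_dvd_help {d a b : ℤ} (h1 : b < a) (h2 : a - b < d) : ¬ d ∣ (b - a) := by
  intro h
  rw [dvd_sub_comm] at h
  have := Int.le_of_dvd (by omega) h
  omega

lemma chi_zero_of_lt {x k : ℕ} (h : x < k) : chi p k (x : ℤ_[p]) = 0 := by
  have hp : 2 ≤ p := (Fact.out : p.Prime).two_le
  rw [chi_nat, if_neg]
  refine not_dvd_help (by exact_mod_cast h) ?_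
  have hk : k < p ^ (Nat.log p k + 1) := Nat.lt_pow_succ_log_self hp k
  have : (k : ℤ) - x ≤ (k : ℤ) := by omega
  calc (k : ℤ) - x ≤ (k : ℤ) := this
    _ < (p : ℤ) ^ (Nat.log p k + 1) := by exact_mod_cast hk

lemma chi_self (m : ℕ) : chi p m (m : ℤ_[p]) = 1 := by
  have hp : 0 < p := (Fact.out : p.Prime).pos
  unfold chi
  rw [if_pos]
  rw [sub_self, norm_zero]
  positivity

lemma not_dvd_help' {d a b : ℤ} (h1 : b < a) (h2 : a - b < d) : ¬ d ∣ (a - b) := by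
  intro h
  have := Int.le_of_dvd (by omega) h
  omega

lemma B_eq_diff (f : ℤ_[p] → ℤ_[p]) (B : ℕ → ℤ_[p]) (hB : vdpExpansion p f B)
    (n : ℕ) (hn : 2 ≤ n) (m : ℕ) (hm1 : p ^ (n - 1) ≤ m) (hm2 : m < p ^ n) :
    B m = f (m : ℤ_[p]) - f ((m % p ^ (n - 1) : ℕ) : ℤ_[p]) := by
  have hp : 2 ≤ p := (Fact.out : p.Prime).two_le
  set r := m % p ^ (n - 1) with hrdef
  have hspos : 0 < p ^ (n - 1) := Nat.pow_pos (by omega)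
  have hr : r < p ^ (n - 1) := Nat.mod_lt _ hspos
  have hrm : r ≤ m := Nat.mod_le _ _
  have hrm' : r < m := lt_of_lt_of_le hr hm1
  have hmn : (m : ℤ) < (p : ℤ) ^ n := by exact_mod_cast hm2
  have hdvd_mr : ((p : ℤ)) ^ (n - 1) ∣ (m : ℤ) - (r : ℤ) := by
    have h := Nat.dvd_sub_mod (n := p ^ (n - 1)) m
    have h2 : ((p ^ (n - 1) : ℕ) : ℤ) ∣ ((m - r : ℕ) : ℤ) := Int.natCast_dvd_natCast.mpr h
    rw [Int.ofNat_sub hrm] at h2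
    push_cast at h2
    exact h2
  have h1 : f (m : ℤ_[p]) = ∑ k ∈ Finset.range (m + 1), B k * chi p k (m : ℤ_[p]) := by
    rw [hB]
    exact tsum_eq_sum fun k hk => by
      rw [chi_zero_of_lt (by simpa using hk), mul_zero]
  have h2 : f (r : ℤ_[p]) = ∑ k ∈ Finset.range (m + 1), B k * chi p k (r : ℤ_[p]) := by
    rw [hB]
    exact tsum_eq_sum fun k hk => by
      rw [chi_zero_of_lt (lt_of_le_of_lt hrm (by simpa using hk)), mul_zero]
  rw [h1, h2, ← Finset.sum_sub_distrib]
  rw [Finset.sum_eq_single m]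
  · have hlogm : Nat.log p m = n - 1 :=
      Nat.log_eq_of_pow_le_of_lt_pow hm1 (by rw [show n - 1 + 1 = n by omega]; exact hm2)
    have hnot : ¬ (p : ℤ) ^ n ∣ (r : ℤ) - (m : ℤ) := by
      refine not_dvd_help (by exact_mod_cast hrm') ?_
      have : (0 : ℤ) ≤ r := Int.natCast_nonneg r
      omega
    rw [chi_self, chi_nat, hlogm, show n - 1 + 1 = n by omega, if_neg hnot, mul_one, mul_zero,
      sub_zero]
  · intro k hk hkm
    have hkm' : k ≤ m := by
      have := Finset.mem_range.mp hk
      omega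
    rcases lt_or_ge k (p ^ (n - 1)) with hcase | hcase
    · have hL : Nat.log p k + 1 ≤ n - 1 := by
        rcases Nat.eq_zero_or_pos k with rfl | hk0
        · have : Nat.log p 0 = 0 := Nat.log_zero_right p
          omega
        · have := Nat.log_lt_of_lt_pow hk0.ne' hcase
          omega
      have hd : (p : ℤ) ^ (Nat.log p k + 1) ∣ (m : ℤ) - r :=
        dvd_trans (pow_dvd_pow _ hL) hdvd_mr
      have hiff : ((p : ℤ) ^ (Nat.log p k + 1) ∣ (m : ℤ) - k)
          ↔ ((p : ℤ) ^ (Nat.log p k + 1) ∣ (r : ℤ) - k) := by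
        constructor
        · intro h
          have h3 := dvd_sub h hd
          rwa [show (m : ℤ) - k - ((m : ℤ) - r) = (r : ℤ) - k by ring] at h3
        · intro h
          have h3 := dvd_add h hd
          rwa [show (r : ℤ) - k + ((m : ℤ) - r) = (m : ℤ) - k by ring] at h3
      rw [chi_nat, chi_nat]
      simp only [hiff, sub_self]
    · have hkz : (p : ℕ) ^ (n - 1) ≤ k := hcase
      have hlogk : Nat.log p k = n - 1 :=
        Nat.log_eq_of_pow_le_of_lt_pow hcase
          (by rw [show n - 1 + 1 = n by omega]; exact lt_of_le_of_lt hkm' hm2)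
      have hkm'' : k < m := lt_of_le_of_ne hkm' hkm
      have hnot1 : ¬ (p : ℤ) ^ n ∣ (m : ℤ) - (k : ℤ) := by
        refine not_dvd_help' (by exact_mod_cast hkm'') ?_
        have : (0 : ℤ) ≤ k := Int.natCast_nonneg k
        omega
      have hnot2 : ¬ (p : ℤ) ^ n ∣ (r : ℤ) - (k : ℤ) := by
        have hrk : r < k := lt_of_lt_of_le hr hcase
        refine not_dvd_help (by exact_mod_cast hrk) ?_
        have h0 : (0 : ℤ) ≤ r := Int.natCast_nonneg r
        have h1 : (k : ℤ) ≤ m := by exact_mod_cast hkm'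
        omega
      rw [chi_nat, chi_nat, hlogk, show n - 1 + 1 = n by omega, if_neg hnot1, if_neg hnot2]
      simp
  · intro h
    exact absurd (Finset.self_mem_range_succ m) h

lemma digit_sum_eq_appr (x : ℤ_[p]) : digit p x 0 + p * digit p x 1 = x.appr 2 := by
  have hp : 0 < p := (Fact.out : p.Prime).pos
  have h1 : x.appr 1 < p := by simpa using x.appr_lt 1
  have h2 : x.appr 2 < p ^ 2 := x.appr_lt 2
  have hd : p ∣ x.appr 2 - x.appr 1 := by
    simpa using x.dvd_appr_sub_appr 1 2 (by omega)
  have hmono : x.appr 1 ≤ x.appr 2 := x.appr_mono (by omega)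
  have hmod : x.appr 2 % p = x.appr 1 := by
    have := (Nat.modEq_iff_dvd' hmono).mpr hd
    rw [Nat.ModEq] at this
    rw [← this, Nat.mod_eq_of_lt h1]
  have hdig0 : digit p x 0 = x.appr 1 := by
    unfold digit
    simp [Nat.mod_eq_of_lt h1]
  have hdig1 : digit p x 1 = x.appr 2 / p := by
    unfold digit
    have : x.appr 2 / p < p := Nat.div_lt_of_lt_mul (by rw [← sq]; exact h2)
    simp [Nat.mod_eq_of_lt this]
  rw [hdig0, hdig1, ← hmod, Nat.mod_add_div]

lemma digit_dvd (x : ℤ_[p]) :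
    (p : ℤ_[p]) ^ 2 ∣ x - ((digit p x 0 : ℤ_[p]) + (p : ℤ_[p]) * (digit p x 1 : ℤ_[p])) := by
  have h : (p : ℤ_[p]) ^ 2 ∣ x - ((x.appr 2 : ℕ) : ℤ_[p]) := by
    have := x.appr_spec 2
    rwa [Ideal.mem_span_singleton] at this
  have hc : ((x.appr 2 : ℕ) : ℤ_[p])
      = (digit p x 0 : ℤ_[p]) + (p : ℤ_[p]) * (digit p x 1 : ℤ_[p]) := by
    rw [← digit_sum_eq_appr x]
    push_cast
    ring
  rwa [hc] at h

lemma count_lemma (f : ℤ_[p] → ℤ_[p]) (B : ℕ → ℤ_[p]) (b : ℕ → ℤ_[p])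
    (hf : IsLip p f) (hB : vdpExpansion p f B)
    (hmp : MeasurePreserving f (haarZp p) (haarZp p))
    (n : ℕ) (hn : 2 ≤ n)
    (hb : ∀ m : ℕ, p ^ (n - 1) ≤ m → m ≤ p ^ n - 1 →
      B m = (p : ℤ_[p]) ^ (n - 1) * b m ∧ digit p (b m) 0 ≠ 0)
    (r : ℕ) (hr : r < p ^ (n - 1)) :
    ∑ c ∈ Finset.Ico 1 p, digit p (b (c * p ^ (n - 1) + r)) 0 = ∑ c ∈ Finset.range p, c := by
  have hp2 : 2 ≤ p := (Fact.out : p.Prime).two_le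
  have hppos : 0 < p := by omega
  set s := p ^ (n - 1) with hs
  have hspos : 0 < s := Nat.pow_pos hppos
  have hpn : p ^ n = p * s := by
    rw [hs, ← pow_succ']
    congr 1
    omega
  haveI : NeZero (p ^ n) := ⟨(Nat.pow_pos hppos).ne'⟩
  -- basic facts about m = c*s + r for c ∈ [1, p)
  have hmem : ∀ c ∈ Finset.Ico 1 p, s ≤ c * s + r ∧ c * s + r < p ^ n := by
    intro c hc
    rw [Finset.mem_Ico] at hc
    constructor
    · nlinarith [hc.1]
    · rw [hpn]; nlinarith [hc.2, hr]
  have hmod : ∀ c : ℕ, (c * s + r) % s = r := by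
    intro c
    rw [Nat.mul_add_mod', Nat.mod_eq_of_lt hr]
  have hdig : ∀ c ∈ Finset.Ico 1 p, digit p (b (c * s + r)) 0 ∈ Finset.Ico 1 p := by
    intro c hc
    obtain ⟨h1, h2⟩ := hmem c hc
    obtain ⟨_, hne⟩ := hb (c * s + r) h1 (by omega)
    rw [Finset.mem_Ico]
    refine ⟨by omega, ?_⟩
    unfold digit
    exact Nat.mod_lt _ hppos
  have key : ∀ c ∈ Finset.Ico 1 p, B (c * s + r) = f ((c * s + r : ℕ) : ℤ_[p]) - f ((r : ℕ) : ℤ_[p]) := by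
    intro c hc
    have h := B_eq_diff f B hB n hn (c * s + r) (hmem c hc).1 (hmem c hc).2
    rwa [← hs, hmod c] at h
  have hinj : ∀ c₁ ∈ Finset.Ico 1 p, ∀ c₂ ∈ Finset.Ico 1 p,
      digit p (b (c₁ * s + r)) 0 = digit p (b (c₂ * s + r)) 0 → c₁ = c₂ := by
    intro c₁ hc₁ c₂ hc₂ hdeq
    obtain ⟨hm₁s, hm₁n⟩ := hmem c₁ hc₁
    obtain ⟨hm₂s, hm₂n⟩ := hmem c₂ hc₂
    obtain ⟨hB₁, -⟩ := hb (c₁ * s + r) hm₁s (by omega)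
    obtain ⟨hB₂, -⟩ := hb (c₂ * s + r) hm₂s (by omega)
    obtain ⟨K₁, hK₁⟩ := digit_dvd (b (c₁ * s + r))
    obtain ⟨K₂, hK₂⟩ := digit_dvd (b (c₂ * s + r))
    have hcast : ((digit p (b (c₁ * s + r)) 0 : ℕ) : ℤ_[p])
        = ((digit p (b (c₂ * s + r)) 0 : ℕ) : ℤ_[p]) := by
      exact_mod_cast congrArg (Nat.cast : ℕ → ℤ_[p]) hdeq
    have hpb : (p : ℤ_[p]) ∣ b (c₁ * s + r) - b (c₂ * s + r) := by
      refine ⟨((digit p (b (c₁ * s + r)) 1 : ℕ) : ℤ_[p])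
        - ((digit p (b (c₂ * s + r)) 1 : ℕ) : ℤ_[p]) + (p : ℤ_[p]) * (K₁ - K₂), ?_⟩
      linear_combination hK₁ - hK₂ + hcast
    have hfd : f ((c₁ * s + r : ℕ) : ℤ_[p]) - f ((c₂ * s + r : ℕ) : ℤ_[p])
        = B (c₁ * s + r) - B (c₂ * s + r) := by
      linear_combination (key c₂ hc₂) - (key c₁ hc₁)
    have hpow : (p : ℤ_[p]) ^ n = (p : ℤ_[p]) ^ (n - 1) * p := by
      rw [← pow_succ]
      congr 1
      omega
    have hdvd : (p : ℤ_[p]) ^ n ∣ f ((c₁ * s + r : ℕ) : ℤ_[p]) - f ((c₂ * s + r : ℕ) : ℤ_[p]) := by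
      obtain ⟨K, hK⟩ := hpb
      refine ⟨K, ?_⟩
      rw [hfd, hB₁, hB₂, hpow]
      linear_combination ((p : ℤ_[p]) ^ (n - 1)) * hK
    have htz := (tz_eq_iff n _ _).mpr hdvd
    have hv₁ : (((c₁ * s + r : ℕ) : ZMod (p ^ n))).val = c₁ * s + r := ZMod.val_cast_of_lt hm₁n
    have hv₂ : (((c₂ * s + r : ℕ) : ZMod (p ^ n))).val = c₂ * s + r := ZMod.val_cast_of_lt hm₂n
    have hFeq : PadicInt.toZModPow n (f (((((c₁ * s + r : ℕ) : ZMod (p ^ n)).val : ℕ)) : ℤ_[p]))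
        = PadicInt.toZModPow n (f (((((c₂ * s + r : ℕ) : ZMod (p ^ n)).val : ℕ)) : ℤ_[p])) := by
      rw [hv₁, hv₂]
      exact htz
    have h2 := F_inj f hf hmp n hFeq
    have h3 : c₁ * s + r = c₂ * s + r := by rw [← hv₁, ← hv₂, h2]
    exact Nat.eq_of_mul_eq_mul_right hspos (by omega)
  -- image of the digit map is all of Ico 1 p
  have himg : (Finset.Ico 1 p).image (fun c => digit p (b (c * s + r)) 0) = Finset.Ico 1 p := by
    apply Finset.eq_of_subset_of_card_le
    · intro d hd
      rw [Finset.mem_image] at hd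
      obtain ⟨c, hc, rfl⟩ := hd
      exact hdig c hc
    · rw [Finset.card_image_of_injOn fun c₁ h₁ c₂ h₂ h =>
        hinj c₁ (Finset.mem_coe.mp h₁) c₂ (Finset.mem_coe.mp h₂) h]
  have hsum : ∑ c ∈ Finset.Ico 1 p, digit p (b (c * s + r)) 0
      = ∑ d ∈ Finset.Ico 1 p, d := by
    calc ∑ c ∈ Finset.Ico 1 p, digit p (b (c * s + r)) 0
        = ∑ d ∈ (Finset.Ico 1 p).image (fun c => digit p (b (c * s + r)) 0), d :=
          (Finset.sum_image (f := fun d : ℕ => d)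
            (g := fun c => digit p (b (c * s + r)) 0)
            fun c₁ h₁ c₂ h₂ h => hinj c₁ h₁ c₂ h₂ h).symm
      _ = ∑ d ∈ Finset.Ico 1 p, d := by rw [himg]
  rw [hsum]
  have : Finset.range p = insert 0 (Finset.Ico 1 p) := by
    ext x
    simp only [Finset.mem_range, Finset.mem_insert, Finset.mem_Ico]
    omega
  rw [this, Finset.sum_insert (by simp), zero_add]

open VDP MeasureTheory Finset in
theorem stmt8 (p : ℕ) [Fact p.Prime] (f : ℤ_[p] → ℤ_[p]) (B : ℕ → ℤ_[p]) (b : ℕ → ℤ_[p])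
    (hf : IsLip p f) (hB : vdpExpansion p f B)
    (hmp : MeasurePreserving f (haarZp p) (haarZp p))
    (n : ℕ) (hn : 2 ≤ n)
    (hb : ∀ m : ℕ, p ^ (n - 1) ≤ m → m ≤ p ^ n - 1 →
      B m = (p : ℤ_[p]) ^ (n - 1) * b m ∧ digit p (b m) 0 ≠ 0) :
    (p : ℤ_[p]) ^ (n + 1) ∣
      (∑ m ∈ Finset.Ico (p ^ (n - 1)) (p ^ n), B m) -
        ((((p - 1) * p ^ (2 * n - 1) / 2 : ℕ) : ℤ_[p]) +
          ((∑ m ∈ Finset.Ico (p ^ (n - 1)) (p ^ n), digit p (b m) 1 : ℕ) : ℤ_[p]) *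
            (p : ℤ_[p]) ^ n) := by
  have hp2 : 2 ≤ p := (Fact.out : p.Prime).two_le
  have hppos : 0 < p := by omega
  have hspos : 0 < p ^ (n - 1) := Nat.pow_pos hppos
  have hpn : p ^ n = p * p ^ (n - 1) := by
    rw [← pow_succ']
    congr 1
    omega
  -- termwise divisibility
  have hterm : ∀ m ∈ Finset.Ico (p ^ (n - 1)) (p ^ n),
      (p : ℤ_[p]) ^ (n + 1) ∣ B m - ((digit p (b m) 0 : ℤ_[p]) * (p : ℤ_[p]) ^ (n - 1)
        + (digit p (b m) 1 : ℤ_[p]) * (p : ℤ_[p]) ^ n) := by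
    intro m hm
    rw [Finset.mem_Ico] at hm
    obtain ⟨hBm, -⟩ := hb m hm.1 (by omega)
    obtain ⟨K, hK⟩ := digit_dvd (b m)
    refine ⟨K, ?_⟩
    have e1 : (p : ℤ_[p]) ^ n = (p : ℤ_[p]) ^ (n - 1) * p := by
      rw [← pow_succ]; congr 1; omega
    have e2 : (p : ℤ_[p]) ^ (n + 1) = (p : ℤ_[p]) ^ (n - 1) * (p : ℤ_[p]) ^ 2 := by
      rw [← pow_add]; congr 1; omega
    rw [hBm, e1, e2]
    linear_combination ((p : ℤ_[p]) ^ (n - 1)) * hK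
  have hdvdsum := Finset.dvd_sum hterm
  have hsplit : ∑ m ∈ Finset.Ico (p ^ (n - 1)) (p ^ n),
      (B m - ((digit p (b m) 0 : ℤ_[p]) * (p : ℤ_[p]) ^ (n - 1)
        + (digit p (b m) 1 : ℤ_[p]) * (p : ℤ_[p]) ^ n))
      = (∑ m ∈ Finset.Ico (p ^ (n - 1)) (p ^ n), B m)
        - (((∑ m ∈ Finset.Ico (p ^ (n - 1)) (p ^ n), digit p (b m) 0 : ℕ) : ℤ_[p])
            * (p : ℤ_[p]) ^ (n - 1)
          + ((∑ m ∈ Finset.Ico (p ^ (n - 1)) (p ^ n), digit p (b m) 1 : ℕ) : ℤ_[p])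
            * (p : ℤ_[p]) ^ n) := by
    push_cast
    rw [Finset.sum_sub_distrib, Finset.sum_add_distrib, Finset.sum_mul, Finset.sum_mul]
  rw [hsplit] at hdvdsum
  -- reindex the digit-0 sum
  have hD : ∑ m ∈ Finset.Ico (p ^ (n - 1)) (p ^ n), digit p (b m) 0
      = p ^ (n - 1) * ∑ c ∈ Finset.range p, c := by
    have hre : ∑ m ∈ Finset.Ico (p ^ (n - 1)) (p ^ n), digit p (b m) 0
        = ∑ x ∈ (Finset.range (p ^ (n - 1))) ×ˢ (Finset.Ico 1 p),
            digit p (b (x.2 * p ^ (n - 1) + x.1)) 0 := by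
      refine Finset.sum_nbij' (fun m => (m % p ^ (n - 1), m / p ^ (n - 1)))
        (fun x => x.2 * p ^ (n - 1) + x.1) ?_ ?_ ?_ ?_ ?_
      · intro m hm
        rw [Finset.mem_Ico] at hm
        rw [Finset.mem_product, Finset.mem_range, Finset.mem_Ico]
        refine ⟨Nat.mod_lt _ hspos, ?_, ?_⟩
        · exact Nat.one_le_div_iff hspos |>.mpr hm.1
        · rw [Nat.div_lt_iff_lt_mul hspos]
          rw [← hpn]
          exact hm.2
      · intro x hx
        rw [Finset.mem_product, Finset.mem_range, Finset.mem_Ico] at hx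
        rw [Finset.mem_Ico]
        constructor
        · nlinarith [hx.2.1]
        · rw [hpn]; nlinarith [hx.2.2, hx.1]
      · intro m hm
        exact Nat.div_add_mod' m (p ^ (n - 1))
      · intro x hx
        rw [Finset.mem_product, Finset.mem_range, Finset.mem_Ico] at hx
        refine Prod.ext ?_ ?_
        · simp only
          rw [Nat.mul_add_mod', Nat.mod_eq_of_lt hx.1]
        · simp only
          rw [mul_comm, Nat.mul_add_div hspos, Nat.div_eq_of_lt hx.1, add_zero]
      · intro m hm
        simp only
        rw [Nat.div_add_mod']
    rw [hre, Finset.sum_product]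
    have hcl : ∀ r ∈ Finset.range (p ^ (n - 1)),
        ∑ c ∈ Finset.Ico 1 p, digit p (b (c * p ^ (n - 1) + r)) 0
          = ∑ c ∈ Finset.range p, c := fun r hr =>
      count_lemma f B b hf hB hmp n hn hb r (Finset.mem_range.mp hr)
    rw [Finset.sum_congr rfl hcl, Finset.sum_const, Finset.card_range, smul_eq_mul]
  -- identify the constant
  have hG2 : (∑ c ∈ Finset.range p, c) * 2 = p * (p - 1) := Finset.sum_range_id_mul_two p
  have hC : (p - 1) * p ^ (2 * n - 1) / 2
      = ((p ^ (n - 1) * ∑ c ∈ Finset.range p, c) * p ^ (n - 1)) := by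
    have hpow : p ^ (2 * n - 1) = p ^ (n - 1) * p ^ (n - 1) * p := by
      rw [← pow_add, ← pow_succ]
      congr 1
      omega
    have key : (p - 1) * p ^ (2 * n - 1)
        = ((p ^ (n - 1) * ∑ c ∈ Finset.range p, c) * p ^ (n - 1)) * 2 := by
      calc (p - 1) * p ^ (2 * n - 1)
          = (p * (p - 1)) * (p ^ (n - 1) * p ^ (n - 1)) := by rw [hpow]; ring
        _ = ((∑ c ∈ Finset.range p, c) * 2) * (p ^ (n - 1) * p ^ (n - 1)) := by rw [hG2]
        _ = ((p ^ (n - 1) * ∑ c ∈ Finset.range p, c) * p ^ (n - 1)) * 2 := by ring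
    rw [key, Nat.mul_div_cancel _ (by norm_num : 0 < 2)]
  have hcast : ((((p - 1) * p ^ (2 * n - 1) / 2 : ℕ)) : ℤ_[p])
      = ((∑ m ∈ Finset.Ico (p ^ (n - 1)) (p ^ n), digit p (b m) 0 : ℕ) : ℤ_[p])
        * (p : ℤ_[p]) ^ (n - 1) := by
    rw [hC, hD]
    push_cast
    ring
  rw [hcast]
  exact hdvdsum
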